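/- Let θ ∈ [0,1], σ ≥ 1, and Z_1,...,Z_m i.i.d. Bernoulli with mean Φ(θ/σ). Define the estimator θ̂ = τ_{[0,1]}(σ Φ^{−1}((1/m)∑_{i=1}^m Z_i)). Then there exists a universal constant C > 0 such that E[(θ̂ − θ)²] ≤ C·min(σ²/m, 1). -/

import Mathlib

open Real MeasureTheory ProbabilityTheory Set

/-- Standard normal density. -/
noncomputable def stdNormalPDF (t : ℝ) : ℝ :=
  (Real.sqrt (2 * π))⁻¹ * Real.exp (-t ^ 2 / 2)

/-- Standard normal cumulative distribution function. -/
noncomputable def stdNormalCDF (t : ℝ) : ℝ :=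
  ∫ s in Set.Iic t, stdNormalPDF s

/-- Inverse of the standard normal CDF (for `p ∈ (0,1)`; junk values at the
extended points are handled in `estMap` below). -/
noncomputable def stdNormalInv (p : ℝ) : ℝ :=
  sInf {t : ℝ | p ≤ stdNormalCDF t}

/-- The map `p ↦ τ_{[0,1]}(σ·Φ⁻¹(p))`, with the conventions
`Φ⁻¹(p) = +∞` for `p ≥ 1` (so the truncated value is `1`) and
`Φ⁻¹(p) = -∞` for `p ≤ 0` (so the truncated value is `0`). -/
noncomputable def estMap (σ p : ℝ) : ℝ :=
  if 1 ≤ p then 1 else max 0 (min 1 (σ * stdNormalInv p))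

lemma pdf_eq : stdNormalPDF = gaussianPDFReal 0 1 := by
  ext x; simp [stdNormalPDF, gaussianPDFReal]

lemma pdf_pos (t : ℝ) : 0 < stdNormalPDF t := by
  rw [pdf_eq]; exact gaussianPDFReal_pos 0 1 t one_ne_zero

lemma pdf_integrable : Integrable stdNormalPDF := by
  rw [pdf_eq]; exact integrable_gaussianPDFReal 0 1

lemma pdf_total : ∫ x, stdNormalPDF x = 1 := by
  rw [pdf_eq]; exact integral_gaussianPDFReal_eq_one 0 one_ne_zero

lemma pdf_le_one (t : ℝ) : stdNormalPDF t ≤ 1 := by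
  have h1 : (1:ℝ) ≤ Real.sqrt (2 * π) := by
    rw [show (1:ℝ) = Real.sqrt 1 by simp]
    exact Real.sqrt_le_sqrt (by nlinarith [Real.pi_gt_three])
  have h2 : Real.exp (-t ^ 2 / 2) ≤ 1 := by
    rw [Real.exp_le_one_iff]; nlinarith [sq_nonneg t]
  have h3 : (Real.sqrt (2 * π))⁻¹ ≤ 1 := by
    rw [inv_le_one_iff₀]; right; exact h1
  calc (Real.sqrt (2 * π))⁻¹ * Real.exp (-t ^ 2 / 2) ≤ 1 * 1 := by
        apply mul_le_mul h3 h2 (Real.exp_nonneg _) zero_le_one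
    _ = 1 := by ring

lemma pdf_ge (t : ℝ) (ht : t ∈ Icc (-1:ℝ) 1) : (6:ℝ)⁻¹ ≤ stdNormalPDF t := by
  have h1 : Real.sqrt (2 * π) ≤ 3 := by
    rw [show (3:ℝ) = Real.sqrt 9 by
      rw [show (9:ℝ) = 3^2 by norm_num, Real.sqrt_sq]; norm_num]
    exact Real.sqrt_le_sqrt (by nlinarith [Real.pi_lt_d2])
  have h2 : Real.exp (1/2) ≤ 2 := by
    nlinarith [Real.exp_one_lt_d9, sq_nonneg (Real.exp (1/2) - 2),
      Real.exp_pos (1/2 : ℝ), Real.exp_add (1/2 : ℝ) (1/2 : ℝ)]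
  have h3 : Real.exp (-(1/2 : ℝ)) ≤ Real.exp (-t^2/2) := by
    apply Real.exp_le_exp.2
    obtain ⟨ha, hb⟩ := ht; nlinarith
  have h4 : Real.exp (-(1/2 : ℝ)) = (Real.exp (1/2))⁻¹ := by
    rw [← Real.exp_neg]
  have hs : 0 < Real.sqrt (2 * π) := Real.sqrt_pos.2 (by positivity)
  have h5 : (6:ℝ)⁻¹ ≤ (Real.sqrt (2 * π))⁻¹ * (Real.exp (1/2))⁻¹ := by
    rw [← mul_inv]
    have h6 : Real.sqrt (2*π) * Real.exp (1/2) ≤ 6 := by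
      nlinarith [Real.exp_pos (1/2:ℝ)]
    exact inv_anti₀ (by positivity) h6
  calc (6:ℝ)⁻¹ ≤ (Real.sqrt (2 * π))⁻¹ * (Real.exp (1/2))⁻¹ := h5
    _ ≤ (Real.sqrt (2 * π))⁻¹ * Real.exp (-t^2/2) := by
        rw [← h4]
        exact mul_le_mul_of_nonneg_left h3 (by positivity)
    _ = stdNormalPDF t := rfl

lemma cdf_diff (a b : ℝ) :
    stdNormalCDF b - stdNormalCDF a = ∫ s in a..b, stdNormalPDF s :=
  intervalIntegral.integral_Iic_sub_Iic pdf_integrable.integrableOn pdf_integrable.integrableOn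

lemma cdf_strictMono : StrictMono stdNormalCDF := by
  intro a b hab
  have h := cdf_diff a b
  have hpos : 0 < ∫ s in a..b, stdNormalPDF s :=
    intervalIntegral.intervalIntegral_pos_of_pos pdf_integrable.intervalIntegrable pdf_pos hab
  linarith

lemma cdf_nonneg (t : ℝ) : 0 ≤ stdNormalCDF t :=
  setIntegral_nonneg measurableSet_Iic (fun x _ => (pdf_pos x).le)

lemma cdf_le_one' (t : ℝ) : stdNormalCDF t ≤ 1 := by
  rw [← pdf_total]
  exact setIntegral_le_integral pdf_integrable (ae_of_all _ fun x => (pdf_pos x).le)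

lemma cdf_pos (t : ℝ) : 0 < stdNormalCDF t :=
  lt_of_le_of_lt (cdf_nonneg (t - 1)) (cdf_strictMono (by linarith))

lemma cdf_lt_one (t : ℝ) : stdNormalCDF t < 1 :=
  lt_of_lt_of_le (cdf_strictMono (show t < t + 1 by linarith)) (cdf_le_one' (t + 1))

lemma cdf_lip (a b : ℝ) (hab : a ≤ b) : stdNormalCDF b - stdNormalCDF a ≤ b - a := by
  rw [cdf_diff, intervalIntegral.integral_of_le hab]
  have h1 : ∫ s in Set.Ioc a b, stdNormalPDF s ≤ ∫ s in Set.Ioc a b, (1 : ℝ) :=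
    setIntegral_mono_on pdf_integrable.integrableOn
      (integrableOn_const measure_Ioc_lt_top.ne) measurableSet_Ioc
      (fun x _ => pdf_le_one x)
  have h2 : ∫ s in Set.Ioc a b, (1 : ℝ) = b - a := by
    simp [Real.volume_Ioc, ENNReal.toReal_ofReal (sub_nonneg.2 hab), hab]
  linarith

lemma cdf_continuous : Continuous stdNormalCDF := by
  have h : LipschitzWith 1 stdNormalCDF := by
    apply LipschitzWith.of_dist_le_mul
    intro a b
    rw [NNReal.coe_one, one_mul, Real.dist_eq, Real.dist_eq]
    rcases le_total a b with h | h
    · rw [abs_sub_comm (stdNormalCDF a), abs_sub_comm a b,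
        abs_of_nonneg (sub_nonneg.2 (cdf_strictMono.monotone h)),
        abs_of_nonneg (sub_nonneg.2 h)]
      exact cdf_lip a b h
    · rw [abs_of_nonneg (sub_nonneg.2 (cdf_strictMono.monotone h)),
        abs_of_nonneg (sub_nonneg.2 h)]
      exact cdf_lip b a h
  exact h.continuous

lemma cdf_gap (a b : ℝ) (ha : -1 ≤ a) (hab : a ≤ b) (hb : b ≤ 1) :
    (b - a) / 6 ≤ stdNormalCDF b - stdNormalCDF a := by
  rw [cdf_diff, intervalIntegral.integral_of_le hab]
  have h := setIntegral_ge_of_const_le (c := (6 : ℝ)⁻¹) measurableSet_Ioc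
    measure_Ioc_lt_top.ne
    (fun x hx => pdf_ge x ⟨le_trans ha hx.1.le, le_trans hx.2 hb⟩)
    pdf_integrable.integrableOn
  rw [Real.volume_real_Ioc_of_le hab, smul_eq_mul] at h
  linarith

lemma cdf_eq_cdf (t : ℝ) : stdNormalCDF t = cdf (gaussianReal 0 1) t := by
  rw [cdf_eq_real, measureReal_def, gaussianReal_apply_eq_integral 0 one_ne_zero,
    ENNReal.toReal_ofReal
      (setIntegral_nonneg measurableSet_Iic fun x _ => gaussianPDFReal_nonneg 0 1 x),
    stdNormalCDF, pdf_eq]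

lemma exists_cdf_ge (x : ℝ) (hx : x < 1) : ∃ t, x ≤ stdNormalCDF t := by
  have h : Filter.Tendsto stdNormalCDF Filter.atTop (nhds 1) := by
    have he : stdNormalCDF = fun t => cdf (gaussianReal 0 1) t := funext cdf_eq_cdf
    rw [he]
    exact tendsto_cdf_atTop _
  exact (h.eventually (eventually_ge_nhds hx)).exists

lemma inv_cdf (t : ℝ) : stdNormalInv (stdNormalCDF t) = t := by
  have hS : {s : ℝ | stdNormalCDF t ≤ stdNormalCDF s} = Set.Ici t := by
    ext s
    simp [Set.mem_setOf_eq, Set.mem_Ici, cdf_strictMono.le_iff_le]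
  rw [stdNormalInv, hS, csInf_Ici]

lemma inv_cdf_spec {a b x : ℝ} (hab : a ≤ b) (h1 : stdNormalCDF a ≤ x)
    (h2 : x ≤ stdNormalCDF b) :
    stdNormalInv x ∈ Set.Icc a b ∧ stdNormalCDF (stdNormalInv x) = x := by
  obtain ⟨t, ht, hxt⟩ := intermediate_value_Icc hab cdf_continuous.continuousOn ⟨h1, h2⟩
  constructor
  · rw [← hxt, inv_cdf]; exact ht
  · rw [← hxt, inv_cdf]

lemma estMap_mem (σ p : ℝ) : estMap σ p ∈ Set.Icc (0 : ℝ) 1 := by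
  rw [estMap]
  split
  · exact ⟨zero_le_one, le_rfl⟩
  · exact ⟨le_max_left _ _, max_le zero_le_one (min_le_left _ _)⟩

lemma estMap_key {σ θ : ℝ} (hσ : 1 ≤ σ) (hθ0 : 0 ≤ θ) (hθ1 : θ ≤ 1) (x : ℝ) :
    |estMap σ x - θ| ≤ 6 * σ * |x - stdNormalCDF (θ / σ)| := by
  have hσ0 : (0 : ℝ) < σ := lt_of_lt_of_le one_pos hσ
  have ha0 : 0 ≤ θ / σ := div_nonneg hθ0 hσ0.le
  have ha1 : θ / σ ≤ 1 / σ := by gcongr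
  have hs1 : 1 / σ ≤ 1 := by rw [div_le_one hσ0]; exact hσ
  set p := stdNormalCDF (θ / σ) with hp
  have hpa : stdNormalCDF 0 ≤ p := cdf_strictMono.monotone ha0
  have hpb : p ≤ stdNormalCDF (1 / σ) := cdf_strictMono.monotone ha1
  rcases le_or_gt x (stdNormalCDF 0) with hA | hA
  · -- low case : estMap σ x = 0
    have hx1 : ¬(1 ≤ x) := by have := cdf_lt_one 0; linarith
    have hinv : stdNormalInv x ≤ 0 := by
      by_cases hbdd : BddBelow {t : ℝ | x ≤ stdNormalCDF t}
      · exact csInf_le hbdd hA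
      · rw [stdNormalInv, Real.sInf_of_not_bddBelow hbdd]
    have hfx : estMap σ x = 0 := by
      rw [estMap, if_neg hx1]
      exact max_eq_left (le_trans (min_le_right _ _) (by nlinarith))
    have hgap : (θ / σ - 0) / 6 ≤ p - stdNormalCDF 0 :=
      cdf_gap 0 (θ / σ) (by norm_num) ha0 (le_trans ha1 hs1)
    rw [hfx, zero_sub, abs_neg, abs_of_nonneg hθ0, abs_sub_comm,
      abs_of_nonneg (by linarith : (0 : ℝ) ≤ p - x)]
    have h3 : θ / σ / 6 ≤ p - x := by linarith
    have h5 : 6 * σ * (θ / σ / 6) = θ := by field_simp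
    calc θ = 6 * σ * (θ / σ / 6) := h5.symm
      _ ≤ 6 * σ * (p - x) := by
          exact mul_le_mul_of_nonneg_left h3 (by positivity)
  rcases lt_or_ge x (stdNormalCDF (1 / σ)) with hB | hB
  · -- middle case
    obtain ⟨⟨ht0, ht1⟩, hΦt⟩ :=
      inv_cdf_spec (show (0 : ℝ) ≤ 1 / σ by positivity) hA.le hB.le
    set t := stdNormalInv x with htdef
    have hfx : estMap σ x = σ * t := by
      have hx1 : ¬(1 ≤ x) := by have := cdf_lt_one (1 / σ); linarith
      rw [estMap, if_neg hx1]
      have hm1 : σ * t ≤ 1 := by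
        calc σ * t ≤ σ * (1 / σ) := mul_le_mul_of_nonneg_left ht1 hσ0.le
          _ = 1 := by field_simp
      rw [min_eq_right hm1, max_eq_right (mul_nonneg hσ0.le ht0)]
    have hkey : |t - θ / σ| ≤ 6 * |x - p| := by
      rcases le_total (θ / σ) t with h | h
      · have hg := cdf_gap (θ / σ) t (by linarith) h (by linarith)
        rw [hΦt] at hg
        have hxp : p ≤ x := by rw [← hΦt]; exact cdf_strictMono.monotone h
        rw [abs_of_nonneg (sub_nonneg.2 h), abs_of_nonneg (by linarith)]
        linarith
      · have hg := cdf_gap t (θ / σ) (by linarith) h (by linarith)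
        rw [hΦt] at hg
        have hxp : x ≤ p := by rw [← hΦt]; exact cdf_strictMono.monotone h
        rw [abs_of_nonpos (sub_nonpos.2 h), abs_of_nonpos (by linarith)]
        linarith
    have heq : σ * t - θ = σ * (t - θ / σ) := by field_simp
    calc |estMap σ x - θ| = σ * |t - θ / σ| := by
          rw [hfx, heq, abs_mul, abs_of_pos hσ0]
      _ ≤ σ * (6 * |x - p|) := mul_le_mul_of_nonneg_left hkey hσ0.le
      _ = 6 * σ * |x - p| := by ring
  · -- high case : estMap σ x = 1
    have hfx : estMap σ x = 1 := by
      rcases le_or_gt 1 x with hx1 | hx1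
      · rw [estMap, if_pos hx1]
      · rw [estMap, if_neg (not_le.2 hx1)]
        obtain ⟨t0, ht0⟩ := exists_cdf_ge x hx1
        have hinv : 1 / σ ≤ stdNormalInv x :=
          le_csInf ⟨t0, ht0⟩ fun t ht => cdf_strictMono.le_iff_le.1 (le_trans hB ht)
        have h1 : (1 : ℝ) ≤ σ * stdNormalInv x := by
          calc (1 : ℝ) = σ * (1 / σ) := by field_simp
            _ ≤ σ * stdNormalInv x := mul_le_mul_of_nonneg_left hinv hσ0.le
        rw [min_eq_left h1, max_eq_right (by linarith)]
    have hgap : (1 / σ - θ / σ) / 6 ≤ stdNormalCDF (1 / σ) - p :=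
      cdf_gap (θ / σ) (1 / σ) (by linarith) ha1 hs1
    have hxp : p ≤ x := le_trans hpb hB
    rw [hfx, abs_of_nonneg (by linarith : (0 : ℝ) ≤ 1 - θ),
      abs_of_nonneg (by linarith : (0 : ℝ) ≤ x - p)]
    have h3 : (1 - θ) / σ / 6 ≤ x - p := by
      have heq : 1 / σ - θ / σ = (1 - θ) / σ := by ring
      linarith [heq ▸ hgap]
    have h5 : 6 * σ * ((1 - θ) / σ / 6) = 1 - θ := by field_simp
    calc 1 - θ = 6 * σ * ((1 - θ) / σ / 6) := h5.symm
      _ ≤ 6 * σ * (x - p) := mul_le_mul_of_nonneg_left h3 (by positivity)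

lemma estMap_sq {σ θ : ℝ} (hσ : 1 ≤ σ) (hθ0 : 0 ≤ θ) (hθ1 : θ ≤ 1) (x : ℝ) :
    (estMap σ x - θ) ^ 2 ≤ 36 * σ ^ 2 * (x - stdNormalCDF (θ / σ)) ^ 2 := by
  have h := estMap_key hσ hθ0 hθ1 x
  have h1 := abs_nonneg (estMap σ x - θ)
  have h2 := abs_nonneg (x - stdNormalCDF (θ / σ))
  calc (estMap σ x - θ) ^ 2 = |estMap σ x - θ| ^ 2 := (sq_abs _).symm
    _ ≤ (6 * σ * |x - stdNormalCDF (θ / σ)|) ^ 2 := by nlinarith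
    _ = 36 * σ ^ 2 * (x - stdNormalCDF (θ / σ)) ^ 2 := by
        rw [mul_pow, mul_pow, sq_abs]; ring

lemma estMap_sq_le_one {σ θ : ℝ} (hθ0 : 0 ≤ θ) (hθ1 : θ ≤ 1) (x : ℝ) :
    (estMap σ x - θ) ^ 2 ≤ 1 := by
  obtain ⟨h0, h1⟩ := estMap_mem σ x
  nlinarith

lemma meas_comp {Ω : Type} [MeasurableSpace Ω] {g : Ω → ℝ} (hg : Measurable g)
    {R : Set ℝ} (hR : R.Countable) (hrange : ∀ ω, g ω ∈ R) (f : ℝ → ℝ) :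
    Measurable fun ω => f (g ω) := by
  have : Countable R := hR.to_subtype
  have h1 : Measurable fun ω => (⟨g ω, hrange ω⟩ : R) := hg.subtype_mk
  exact (measurable_of_countable fun r : R => f r).comp h1

/-- One-bit distributed estimation with `σ ≥ 1`: if `Z_1, ..., Z_m` are i.i.d.
Bernoulli with mean `Φ(θ/σ)` and `θ̂ = τ_{[0,1]}(σ·Φ⁻¹((1/m)∑ Z_i))`, then
`E[(θ̂ - θ)²] ≤ C·min(σ²/m, 1)` for a universal constant `C > 0`. -/
theorem one_bit_estimator_mse :
    ∃ C : ℝ, C > 0 ∧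
      ∀ (Ω : Type) (_ : MeasurableSpace Ω) (μ : Measure Ω), IsProbabilityMeasure μ →
      ∀ (m : ℕ), 1 ≤ m →
      ∀ (θ σ : ℝ), θ ∈ Set.Icc (0 : ℝ) 1 → 1 ≤ σ →
      ∀ (Z : Fin m → Ω → ℝ),
        (∀ i, Measurable (Z i)) →
        (∀ i ω, Z i ω = 0 ∨ Z i ω = 1) →
        iIndepFun Z μ →
        (∀ i, ∫ ω, Z i ω ∂μ = stdNormalCDF (θ / σ)) →
        ∫ ω, (estMap σ ((∑ i, Z i ω) / m) - θ) ^ 2 ∂μ ≤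
          C * min (σ ^ 2 / m) 1 := by
  refine ⟨9, by norm_num, ?_⟩
  intro Ω mΩ μ hμ m hm θ σ hθ hσ Z hZm hZ01 hZindep hZmean
  obtain ⟨hθ0, hθ1⟩ := hθ
  have hσ0 : (0 : ℝ) < σ := lt_of_lt_of_le one_pos hσ
  have hm0 : (0 : ℝ) < (m : ℝ) := by exact_mod_cast hm
  set p : ℝ := stdNormalCDF (θ / σ) with hpdef
  have hp0 : 0 < p := cdf_pos _
  have hp1 : p < 1 := cdf_lt_one _
  -- integrability of Z i
  have hZb : ∀ i ω, ‖Z i ω‖ ≤ 1 := by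
    intro i ω; rcases hZ01 i ω with h | h <;> simp [h]
  have hZint : ∀ i, Integrable (Z i) μ := fun i =>
    (integrable_const (1 : ℝ)).mono' (hZm i).aestronglyMeasurable
      (ae_of_all _ fun ω => hZb i ω)
  -- centered variables
  set W : Fin m → Ω → ℝ := fun i ω => Z i ω - p with hWdef
  have hWm : ∀ i, Measurable (W i) := fun i => (hZm i).sub measurable_const
  have hWb : ∀ i ω, ‖W i ω‖ ≤ 1 := by
    intro i ω
    rw [Real.norm_eq_abs, abs_le]
    rcases hZ01 i ω with h | h <;> simp [W, h] <;> constructor <;> linarith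
  have hWint : ∀ i, Integrable (W i) μ := fun i =>
    (hZint i).sub (integrable_const p)
  have hWmean : ∀ i, ∫ ω, W i ω ∂μ = 0 := by
    intro i
    rw [hWdef]
    simp only
    rw [integral_sub (hZint i) (integrable_const p), hZmean i, integral_const]
    simp
  have hWWint : ∀ i j, Integrable (fun ω => W i ω * W j ω) μ := by
    intro i j
    refine (integrable_const (1 : ℝ)).mono'
      (((hWm i).mul (hWm j)).aestronglyMeasurable) (ae_of_all _ fun ω => ?_)
    rw [norm_mul]
    calc ‖W i ω‖ * ‖W j ω‖ ≤ 1 * 1 :=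
          mul_le_mul (hWb i ω) (hWb j ω) (norm_nonneg _) zero_le_one
      _ = 1 := by ring
  -- second moments
  have hdiag : ∀ i, ∫ ω, W i ω * W i ω ∂μ = p - p ^ 2 := by
    intro i
    have hint2 : Integrable (fun ω => 2 * p * Z i ω) μ := (hZint i).const_mul _
    have hint1 : Integrable (fun ω => Z i ω - 2 * p * Z i ω) μ := (hZint i).sub hint2
    have hexp : (fun ω => W i ω * W i ω) =
        fun ω => (Z i ω - 2 * p * Z i ω) + p ^ 2 := by
      funext ω
      rcases hZ01 i ω with h | h <;> simp only [W, h] <;> ring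
    rw [hexp, integral_add hint1 (integrable_const _), integral_sub (hZint i) hint2,
      integral_const_mul, hZmean i, integral_const]
    simp [← hpdef]
    ring
  have hcross : ∀ i j, i ≠ j → ∫ ω, W i ω * W j ω ∂μ = 0 := by
    intro i j hij
    have hind : IndepFun (Z i) (Z j) μ := hZindep.indepFun hij
    have hindW : IndepFun (W i) (W j) μ := by
      have := hind.comp (φ := fun x : ℝ => x - p) (ψ := fun x : ℝ => x - p)
        (measurable_id.sub_const p) (measurable_id.sub_const p)
      exact this
    have h := hindW.integral_mul_eq_mul_integral (hWint i).aestronglyMeasurable (hWint j).aestronglyMeasurable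
    have h2 : (fun ω => W i ω * W j ω) = W i * W j := rfl
    rw [h2, h, hWmean i, zero_mul]
  have hWij : ∀ i j, ∫ ω, W i ω * W j ω ∂μ =
      if i = j then p - p ^ 2 else 0 := by
    intro i j
    by_cases h : i = j
    · rw [if_pos h, h, hdiag]
    · rw [if_neg h, hcross i j h]
  -- variance of the sum
  have hsum_sq : ∫ ω, (∑ i, W i ω) ^ 2 ∂μ = m * (p - p ^ 2) := by
    have hexp : ∀ ω, (∑ i, W i ω) ^ 2 = ∑ i, ∑ j, W i ω * W j ω := by
      intro ω
      rw [sq, Finset.sum_mul_sum]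
    calc ∫ ω, (∑ i, W i ω) ^ 2 ∂μ
        = ∫ ω, ∑ i, ∑ j, W i ω * W j ω ∂μ := by
          congr 1; funext ω; exact hexp ω
      _ = ∑ i, ∑ j, ∫ ω, W i ω * W j ω ∂μ := by
          rw [integral_finset_sum _ fun i _ =>
            integrable_finset_sum _ fun j _ => hWWint i j]
          congr 1; funext i
          rw [integral_finset_sum _ fun j _ => hWWint i j]
      _ = ∑ i : Fin m, ∑ j : Fin m, (if i = j then p - p ^ 2 else 0) := by
          congr 1; funext i; congr 1; funext j; exact hWij i j
      _ = ∑ i : Fin m, (p - p ^ 2) := by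
          congr 1; funext i
          rw [Finset.sum_ite_eq]
          simp
      _ = m * (p - p ^ 2) := by
          rw [Finset.sum_const, Finset.card_univ, Fintype.card_fin, nsmul_eq_mul]
  -- mean squared error of the empirical mean
  have hmean_rw : ∀ ω, (∑ i, Z i ω) / m - p = (∑ i, W i ω) / m := by
    intro ω
    rw [Finset.sum_sub_distrib, Finset.sum_const, Finset.card_univ, Fintype.card_fin]
    field_simp
    rw [nsmul_eq_mul]
  have hvar : ∫ ω, ((∑ i, Z i ω) / m - p) ^ 2 ∂μ = (p - p ^ 2) / m := by
    calc ∫ ω, ((∑ i, Z i ω) / m - p) ^ 2 ∂μ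
        = ∫ ω, (1 / (m : ℝ) ^ 2) * (∑ i, W i ω) ^ 2 ∂μ := by
          congr 1; funext ω
          rw [hmean_rw ω]
          field_simp
      _ = (1 / (m : ℝ) ^ 2) * ∫ ω, (∑ i, W i ω) ^ 2 ∂μ := integral_const_mul _ _
      _ = (p - p ^ 2) / m := by
          rw [hsum_sq]
          field_simp
  -- measurability of the estimator integrand
  have hSm : Measurable fun ω => (∑ i, Z i ω) / (m : ℝ) :=
    (Finset.measurable_sum _ fun i _ => hZm i).div_const _
  have hrange : ∀ ω, (∑ i, Z i ω) / (m : ℝ) ∈ Set.range fun k : ℕ => (k : ℝ) / m := by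
    intro ω
    refine ⟨(Finset.univ.filter fun i => Z i ω = 1).card, ?_⟩
    congr 1
    have h1 : ∑ i, Z i ω = ∑ i : Fin m, (if Z i ω = 1 then (1 : ℝ) else 0) :=
      Finset.sum_congr rfl fun i _ => by rcases hZ01 i ω with h | h <;> simp [h]
    rw [h1, Finset.sum_boole]
  have hestm : Measurable fun ω => (estMap σ ((∑ i, Z i ω) / m) - θ) ^ 2 := by
    have h := meas_comp hSm (Set.countable_range _) hrange (estMap σ)
    exact ((h.sub measurable_const).pow_const 2)
  have hestint : Integrable (fun ω => (estMap σ ((∑ i, Z i ω) / m) - θ) ^ 2) μ := by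
    refine (integrable_const (1 : ℝ)).mono' hestm.aestronglyMeasurable
      (ae_of_all _ fun ω => ?_)
    rw [Real.norm_eq_abs, abs_of_nonneg (sq_nonneg _)]
    exact estMap_sq_le_one hθ0 hθ1 _
  have hvarint : Integrable (fun ω => ((∑ i, Z i ω) / m - p) ^ 2) μ := by
    refine (integrable_const (1 : ℝ)).mono'
      (((hSm.sub measurable_const).pow_const 2).aestronglyMeasurable)
      (ae_of_all _ fun ω => ?_)
    rw [Real.norm_eq_abs, abs_of_nonneg (sq_nonneg _)]
    have hs0 : 0 ≤ (∑ i, Z i ω) / (m : ℝ) := by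
      apply div_nonneg _ hm0.le
      apply Finset.sum_nonneg fun i _ => ?_
      rcases hZ01 i ω with h | h <;> simp [h]
    have hs1 : (∑ i, Z i ω) / (m : ℝ) ≤ 1 := by
      rw [div_le_one hm0]
      calc ∑ i, Z i ω ≤ ∑ i : Fin m, (1 : ℝ) := by
            apply Finset.sum_le_sum fun i _ => ?_
            rcases hZ01 i ω with h | h <;> simp [h]
        _ = m := by simp
    nlinarith
  -- bound 1 : by the Lipschitz estimate
  have hb1 : ∫ ω, (estMap σ ((∑ i, Z i ω) / m) - θ) ^ 2 ∂μ ≤ 9 * σ ^ 2 / m := by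
    calc ∫ ω, (estMap σ ((∑ i, Z i ω) / m) - θ) ^ 2 ∂μ
        ≤ ∫ ω, 36 * σ ^ 2 * ((∑ i, Z i ω) / m - p) ^ 2 ∂μ := by
          apply integral_mono hestint (hvarint.const_mul _)
          intro ω
          exact estMap_sq hσ hθ0 hθ1 _
      _ = 36 * σ ^ 2 * ((p - p ^ 2) / m) := by rw [integral_const_mul, hvar]
      _ ≤ 36 * σ ^ 2 * (1 / 4 / (m : ℝ)) := by
          gcongr
          nlinarith [sq_nonneg (p - 1 / 2)]
      _ = 9 * σ ^ 2 / m := by field_simp; ring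
  -- bound 2 : trivial bound
  have hb2 : ∫ ω, (estMap σ ((∑ i, Z i ω) / m) - θ) ^ 2 ∂μ ≤ 1 := by
    calc ∫ ω, (estMap σ ((∑ i, Z i ω) / m) - θ) ^ 2 ∂μ
        ≤ ∫ _ω, (1 : ℝ) ∂μ :=
          integral_mono hestint (integrable_const 1) fun ω =>
            estMap_sq_le_one hθ0 hθ1 _
      _ = 1 := by simp
  -- combine
  rcases le_total (σ ^ 2 / m) 1 with hc | hc
  · rw [min_eq_left hc]
    calc ∫ ω, (estMap σ ((∑ i, Z i ω) / m) - θ) ^ 2 ∂μ ≤ 9 * σ ^ 2 / m := hb1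
      _ = 9 * (σ ^ 2 / m) := by ring
  · rw [min_eq_right hc]
    linarith
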